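/- arXiv:1302.5813 — 4 statements merged into one kernel-verified Lean document; each statement's English description precedes it below -/
import Mathlib

section
/- Let R be a left and right Ore domain with Ore localization K (a skew field). For any left R-module M, the kernel of the canonical map M → K ⊗_R M is exactly tor(M) = {m ∈ M | ∃ a ∈ R, a ≠ 0, a·m = 0}. -/
/-- Over a left and right Ore domain `R` with Ore localization `K = R[(R∖{0})⁻¹]` (a skew
field, flat over `R`, so that `K ⊗_R M` is the Ore localization of `M`), the kernel of the
canonical map `M → K ⊗_R M`, `m ↦ m/1`, is exactly `tor(M) = {m | ∃ a ≠ 0, a • m = 0}`. -/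
theorem stmt7 (R : Type) [Ring R] [IsDomain R]
    [OreLocalization.OreSet (nonZeroDivisors R)]
    (hOreR : ∀ a b : R, a ≠ 0 → b ≠ 0 → ∃ c' d' : R, c' ≠ 0 ∧ d' ≠ 0 ∧ a * c' = b * d')
    (M : Type) [AddCommGroup M] [Module R M] :
    ∀ m : M, (m /ₒ (1 : nonZeroDivisors R) : OreLocalization (nonZeroDivisors R) M) = 0 ↔
      ∃ a : R, a ≠ 0 ∧ a • m = 0 := by
  intro m
  rw [OreLocalization.zero_def, OreLocalization.oreDiv_eq_iff]
  constructor
  · rintro ⟨u, v, h1, h2⟩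
    simp only [OneMemClass.coe_one, mul_one, Submonoid.coe_mul] at h2
    refine ⟨v, ?_, ?_⟩
    · rw [← h2]; exact nonZeroDivisors.coe_ne_zero u
    · rw [← h1, Submonoid.smul_def, smul_zero]
  · rintro ⟨a, ha, ham⟩
    exact ⟨⟨a, mem_nonZeroDivisors_of_ne_zero ha⟩, a, by simp [Submonoid.smul_def, ham]⟩
end

section
/- Let R be a left and right Ore domain. Every finitely generated torsion-free left R-module embeds into a finitely generated free R-module. -/
set_option linter.unusedSectionVars false
set_option maxHeartbeats 1000000

open OreLocalization nonZeroDivisors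

namespace Stmt8Aux
variable {R : Type} [Ring R] [IsDomain R] [OreLocalization.OreSet (R⁰)]

lemma smul_eq_num_mul (r : R) (d : OreLocalization (R⁰) R) :
    r • d = numeratorHom r * d := by
  rw [← smul_one_oreDiv_one_smul r d, numeratorHom_apply]
  simp [smul_eq_mul]

/-- `numeratorHom` as an `R`-linear map. -/
def nuLin : R →ₗ[R] OreLocalization (R⁰) R where
  toFun := numeratorHom
  map_add' a b := by simp only [numeratorHom_apply, add_oreDiv]
  map_smul' r a := by
    simp only [RingHom.id_apply, smul_eq_mul, map_mul, smul_eq_num_mul]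

lemma nuLin_inj : Function.Injective (nuLin (R := R)) := by
  apply numeratorHom_inj
  intro x hx
  rw [mem_nonZeroDivisorsLeft_iff]
  intro y hy
  rcases mul_eq_zero.mp hy with h | h
  · exact absurd h (mem_nonZeroDivisors_iff_ne_zero.mp hx)
  · exact h

lemma nuLin_ne_zero {t : R} (ht : t ≠ 0) : (nuLin t : OreLocalization (R⁰) R) ≠ 0 := by
  intro h
  apply ht
  apply nuLin_inj
  rw [h]; simp [nuLin, numeratorHom_apply, zero_oreDiv']

lemma single_denom
    (hOreR : ∀ a b : R, a ≠ 0 → b ≠ 0 → ∃ c' d' : R, c' ≠ 0 ∧ d' ≠ 0 ∧ a * c' = b * d')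
    (q : OreLocalization (R⁰) R) :
    ∃ t : R, t ≠ 0 ∧ ∃ u : R, q * numeratorHom t = numeratorHom u := by
  obtain ⟨r, s, rfl⟩ : ∃ (r : R) (s : R⁰), q = r /ₒ s := by
    induction q using OreLocalization.ind with | _ r s => exact ⟨r, s, rfl⟩
  by_cases hr : r = 0
  · subst hr
    exact ⟨1, one_ne_zero, 0, by simp [numeratorHom_apply, zero_oreDiv, zero_oreDiv',
      zero_mul]⟩
  · obtain ⟨c', d', hc', hd', h⟩ := hOreR r s hr (nonZeroDivisors.coe_ne_zero s)
    refine ⟨c', hc', d', ?_⟩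
    rw [numeratorHom_apply, numeratorHom_apply,
      oreDiv_mul_char r c' s 1 r 1 (by simp), one_mul, h]
    rw [oreDiv_eq_iff]
    exact ⟨s, 1, by simp [Submonoid.smul_def, smul_eq_mul], by simp⟩

lemma common_denom
    (hOreR : ∀ a b : R, a ≠ 0 → b ≠ 0 → ∃ c' d' : R, c' ≠ 0 ∧ d' ≠ 0 ∧ a * c' = b * d')
    {ι : Type} [DecidableEq ι] (s : Finset ι) (q : ι → OreLocalization (R⁰) R) :
    ∃ t : R, t ≠ 0 ∧ ∀ i ∈ s, ∃ u : R, q i * numeratorHom t = numeratorHom u := by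
  induction s using Finset.induction with
  | empty => exact ⟨1, one_ne_zero, by simp⟩
  | @insert a s ha ih =>
    obtain ⟨t, ht, hts⟩ := ih
    obtain ⟨t₁, ht₁, u₁, hu₁⟩ := single_denom hOreR (q a)
    obtain ⟨c', d', hc', hd', h⟩ := hOreR t₁ t ht₁ ht
    refine ⟨t₁ * c', mul_ne_zero ht₁ hc', ?_⟩
    intro i hi
    rcases Finset.mem_insert.mp hi with rfl | hi
    · exact ⟨u₁ * c', by rw [map_mul, ← mul_assoc, hu₁, ← map_mul]⟩
    · obtain ⟨u, hu⟩ := hts i hi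
      exact ⟨u * d', by rw [h, map_mul, ← mul_assoc, hu, ← map_mul]⟩

end Stmt8Aux

/-- Cohn's embedding theorem: every finitely generated torsion-free left module over a left
and right Ore domain embeds into a finitely generated free module. -/
theorem stmt8 (R : Type) [Ring R] [IsDomain R]
    (hOreL : ∀ a b : R, a ≠ 0 → b ≠ 0 → ∃ c d : R, c ≠ 0 ∧ d ≠ 0 ∧ c * a = d * b)
    (hOreR : ∀ a b : R, a ≠ 0 → b ≠ 0 → ∃ c' d' : R, c' ≠ 0 ∧ d' ≠ 0 ∧ a * c' = b * d')
    (M : Type) [AddCommGroup M] [Module R M] [Module.Finite R M]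
    (htf : ∀ (a : R) (m : M), a ≠ 0 → a • m = 0 → m = 0) :
    ∃ (n : ℕ) (f : M →ₗ[R] (Fin n → R)), Function.Injective f := by
  classical
  -- the nonzero elements form an Ore set
  have ore : ∀ (r : R) (s : R⁰), ∃ (r' : R) (s' : R⁰), (s' : R) * r = r' * s := by
    intro r s
    by_cases hr : r = 0
    · exact ⟨0, 1, by simp [hr]⟩
    · obtain ⟨c, d, hc, hd, h⟩ := hOreL r s hr (nonZeroDivisors.coe_ne_zero s)
      exact ⟨d, ⟨c, mem_nonZeroDivisors_of_ne_zero hc⟩, h⟩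
  letI : OreLocalization.OreSet (R⁰) :=
    (OreLocalization.nonempty_oreSet_iff_of_noZeroDivisors.mpr ore).some
  -- the canonical map into the localized module
  let ιlin : M →ₗ[R] OreLocalization (R⁰) M :=
    { toFun := fun m => m /ₒ (1 : R⁰)
      map_add' := fun a b => add_oreDiv.symm
      map_smul' := fun r m => by
        simp only [RingHom.id_apply, smul_oreDiv_one] }
  have hι0 : ∀ m : M, ιlin m = 0 → m = 0 := by
    intro m hm
    have hm' : (m /ₒ (1 : R⁰) : OreLocalization (R⁰) M) = 0 /ₒ (1 : R⁰) := by
      simpa [zero_oreDiv, ιlin] using hm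
    rw [oreDiv_eq_iff] at hm'
    obtain ⟨u, v, h1, h2⟩ := hm'
    rw [smul_zero] at h1
    have hv : v = (u : R) := by simpa using h2.symm
    exact htf (u : R) m (mem_nonZeroDivisors_iff_ne_zero.mp u.2)
      (by rw [← hv]; exact h1.symm)
  have hι : Function.Injective ιlin := by
    intro a b h
    have : ιlin (a - b) = 0 := by rw [map_sub, h, sub_self]
    exact sub_eq_zero.mp (hι0 _ this)
  -- generators
  obtain ⟨G, hG⟩ := Module.Finite.fg_top (R := R) (M := M)
  -- the localized module is finitely generated over the division ring of fractions
  let P : Submodule (OreLocalization (R⁰) R) (OreLocalization (R⁰) M) :=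
    Submodule.span _ (↑(G.image (fun m => (m /ₒ (1 : R⁰) : OreLocalization (R⁰) M))))
  have key : ∀ m : M, (m /ₒ (1 : R⁰) : OreLocalization (R⁰) M) ∈ P := by
    intro m
    have hsub : Submodule.span R (↑G) ≤ (P.restrictScalars R).comap ιlin := by
      rw [Submodule.span_le]
      intro g hg
      exact Submodule.subset_span (Finset.mem_coe.mpr (Finset.mem_image_of_mem _ hg))
    have hmem : m ∈ Submodule.span R (↑G : Set M) := by rw [hG]; exact Submodule.mem_top
    exact hsub hmem
  have hfin : Module.Finite (OreLocalization (R⁰) R) (OreLocalization (R⁰) M) := by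
    rw [Module.finite_def]
    refine ⟨G.image (fun m => (m /ₒ (1 : R⁰) : OreLocalization (R⁰) M)), ?_⟩
    rw [eq_top_iff]
    rintro x -
    induction x using OreLocalization.ind with
    | _ m s =>
      have hx : (m /ₒ s : OreLocalization (R⁰) M)
          = ((1 : R) /ₒ s) • (m /ₒ (1 : R⁰)) := by
        rw [OreLocalization.one_div_smul, one_mul]
      rw [hx]
      exact Submodule.smul_mem _ _ (key m)
  letI := hfin
  -- basis over the division ring
  let n := Module.finrank (OreLocalization (R⁰) R) (OreLocalization (R⁰) M)
  let b := Module.finBasis (OreLocalization (R⁰) R) (OreLocalization (R⁰) M)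
  let e := b.equivFun
  let e' := e.restrictScalars R
  let f₀ : M →ₗ[R] (Fin n → OreLocalization (R⁰) R) := e'.toLinearMap.comp ιlin
  have hf₀ : Function.Injective f₀ := e'.injective.comp hι
  -- clear denominators
  obtain ⟨t, ht, hden⟩ := Stmt8Aux.common_denom hOreR
    (G ×ˢ (Finset.univ : Finset (Fin n))) (fun p => f₀ p.1 p.2)
  let φ : (Fin n → OreLocalization (R⁰) R) →ₗ[R] (Fin n → OreLocalization (R⁰) R) :=
    { toFun := fun v j => v j * numeratorHom t
      map_add' := fun v w => by funext j; simp [add_mul]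
      map_smul' := fun r v => by
        funext j
        simp only [Pi.smul_apply, RingHom.id_apply, Stmt8Aux.smul_eq_num_mul, mul_assoc] }
  have hφ : Function.Injective φ := by
    intro v w h
    funext j
    have hj : v j * numeratorHom t = w j * numeratorHom t := congrFun h j
    exact mul_right_cancel₀ (Stmt8Aux.nuLin_ne_zero ht) hj
  -- coordinates land in the image of R
  let c : Fin n → (M →ₗ[R] OreLocalization (R⁰) R) :=
    fun j => (LinearMap.proj j).comp (φ.comp f₀)
  have hc : ∀ j, LinearMap.range (c j) ≤ LinearMap.range (Stmt8Aux.nuLin (R := R)) := by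
    intro j
    rw [LinearMap.range_eq_map, ← hG, Submodule.map_span_le]
    intro g hg
    obtain ⟨u, hu⟩ := hden (g, j) (Finset.mem_product.mpr ⟨hg, Finset.mem_univ _⟩)
    exact ⟨u, hu.symm⟩
  let eR := LinearEquiv.ofInjective (Stmt8Aux.nuLin (R := R)) Stmt8Aux.nuLin_inj
  let d : Fin n → (M →ₗ[R] R) := fun j =>
    eR.symm.toLinearMap.comp
      ((c j).codRestrict _ (fun m => hc j (LinearMap.mem_range_self _ m)))
  refine ⟨n, LinearMap.pi d, ?_⟩
  have h0 : ∀ m : M, LinearMap.pi d m = 0 → m = 0 := by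
    intro m hm
    have hd : ∀ j, d j m = 0 := fun j => by
      have := congrFun hm j
      simpa [LinearMap.pi_apply] using this
    have hcj : ∀ j, c j m = 0 := by
      intro j
      have h1 : ((c j).codRestrict _ (fun m => hc j (LinearMap.mem_range_self _ m))) m
          = eR (d j m) := by
        simp only [d, LinearMap.comp_apply, LinearEquiv.coe_toLinearMap,
          LinearEquiv.apply_symm_apply]
      have h2 := congrArg (Subtype.val) (h1.trans (by rw [hd j, map_zero]))
      simpa using h2
    have hφ0 : φ (f₀ m) = 0 := by
      funext j
      exact hcj j
    have : f₀ m = 0 := hφ (by rw [hφ0, map_zero])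
    exact hι0 m (by
      have := e'.injective (by simpa [f₀] using this.trans (e'.map_zero).symm)
      exact this)
  intro a b h
  have : LinearMap.pi d (a - b) = 0 := by rw [map_sub, h, sub_self]
  exact sub_eq_zero.mp (h0 _ this)
end

section
/- Let Γ be a group and p a prime such that (ℤ/pℤ)Γ has no nontrivial zero divisors. Let f ∈ ℤΓ be nonzero with |f|_p = 0 (i.e., not all coefficients of f are divisible by p). Then the quotient module ℤΓ/ℤΓf has no p-torsion: if h ∈ ℤΓ and p·h ∈ ℤΓf, then h ∈ ℤΓf. -/
/-- Coefficientwise reduction mod `p` as a map of monoid algebras. -/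
noncomputable def redMod (Γ : Type) [Group Γ] (p : ℕ) :
    MonoidAlgebra ℤ Γ → MonoidAlgebra (ZMod p) Γ :=
  fun a => MonoidAlgebra.ofCoeff (Finsupp.mapRange (Int.cast : ℤ → ZMod p) Int.cast_zero a.coeff)

lemma redMod_add (Γ : Type) [Group Γ] (p : ℕ) (a b : MonoidAlgebra ℤ Γ) :
    redMod Γ p (a + b) = redMod Γ p a + redMod Γ p b :=
  by unfold redMod; rw [MonoidAlgebra.coeff_add, Finsupp.mapRange_add Int.cast_add, MonoidAlgebra.ofCoeff_add]

lemma redMod_apply (Γ : Type) [Group Γ] (p : ℕ) (a : MonoidAlgebra ℤ Γ) (γ : Γ) :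
    (redMod Γ p a).coeff γ = ((a.coeff γ : ℤ) : ZMod p) :=
  Finsupp.mapRange_apply (hf := Int.cast_zero)

lemma natCast_mul_apply (Γ : Type) [Group Γ] (R : Type) [Ring R] (p : ℕ)
    (x : MonoidAlgebra R Γ) (γ : Γ) :
    ((p : MonoidAlgebra R Γ) * x).coeff γ = (p : R) * x.coeff γ := by
  rw [MonoidAlgebra.natCast_def, MonoidAlgebra.coeff_single_one_mul]

lemma redMod_single (Γ : Type) [Group Γ] (p : ℕ) (g : Γ) (r : ℤ) :
    redMod Γ p (MonoidAlgebra.single g r) = MonoidAlgebra.single g ((r : ZMod p)) :=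
  by unfold redMod; rw [MonoidAlgebra.coeff_single, Finsupp.mapRange_single, MonoidAlgebra.ofCoeff_single]

lemma redMod_mul (Γ : Type) [Group Γ] (p : ℕ) (a b : MonoidAlgebra ℤ Γ) :
    redMod Γ p (a * b) = redMod Γ p a * redMod Γ p b := by
  induction a using MonoidAlgebra.induction_linear with
  | zero => simp [redMod]
  | add u v hu hv =>
      rw [add_mul, redMod_add, hu, hv, redMod_add, add_mul]
  | single g r =>
      induction b using MonoidAlgebra.induction_linear with
      | zero => simp [redMod]
      | add u v hu hv =>
          rw [mul_add, redMod_add, hu, hv, redMod_add, mul_add]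
      | single g' r' =>
          show redMod Γ p (MonoidAlgebra.single g r * MonoidAlgebra.single g' r')
            = redMod Γ p (MonoidAlgebra.single g r) * redMod Γ p (MonoidAlgebra.single g' r')
          rw [MonoidAlgebra.single_mul_single, redMod_single, redMod_single, redMod_single,
            MonoidAlgebra.single_mul_single, Int.cast_mul]

/-- If `(ℤ/pℤ)Γ` has no nontrivial zero divisors and `f ∈ ℤΓ` is nonzero with `|f|_p = 0`
(not all coefficients of `f` divisible by `p`), then `ℤΓ/ℤΓf` has no `p`-torsion. -/
theorem stmt10 (Γ : Type) [Group Γ] (p : ℕ) (hp : p.Prime)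
    (hzd : ∀ a b : MonoidAlgebra (ZMod p) Γ, a * b = 0 → a = 0 ∨ b = 0)
    (f : MonoidAlgebra ℤ Γ) (hf : f ≠ 0)
    (hvp : ¬ ∀ γ : Γ, (p : ℤ) ∣ f.coeff γ) :
    ∀ h : MonoidAlgebra ℤ Γ,
      (p : MonoidAlgebra ℤ Γ) * h ∈ Submodule.span (MonoidAlgebra ℤ Γ) {f} →
      h ∈ Submodule.span (MonoidAlgebra ℤ Γ) {f} := by
  intro h hmem
  rw [Submodule.mem_span_singleton] at hmem ⊢
  obtain ⟨g, hg⟩ := hmem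
  rw [smul_eq_mul] at hg
  -- the reduction of `f` mod `p` is nonzero
  have hfbar : redMod Γ p f ≠ 0 := by
    intro h0
    apply hvp
    intro γ
    have h1 : (f.coeff γ : ZMod p) = 0 := by
      rw [← redMod_apply, h0]; rfl
    exact_mod_cast (ZMod.intCast_zmod_eq_zero_iff_dvd _ _).mp h1
  -- the reduction of `p * h` is zero
  have hpmulh : redMod Γ p ((p : MonoidAlgebra ℤ Γ) * h) = 0 := by
    apply MonoidAlgebra.ext
    apply Finsupp.ext
    intro γ
    rw [show ((0 : MonoidAlgebra (ZMod p) Γ).coeff γ : ZMod p) = 0 from rfl,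
      redMod_apply, natCast_mul_apply]
    push_cast [ZMod.natCast_self]
    ring
  have hmul0 : redMod Γ p g * redMod Γ p f = 0 := by
    rw [← redMod_mul, hg, hpmulh]
  have hgbar : redMod Γ p g = 0 := (hzd _ _ hmul0).resolve_right hfbar
  -- hence every coefficient of `g` is divisible by `p`
  have hdvd : ∀ γ : Γ, (p : ℤ) ∣ g.coeff γ := by
    intro γ
    have h1 : (g.coeff γ : ZMod p) = 0 := by
      rw [← redMod_apply, hgbar]; rfl
    exact_mod_cast (ZMod.intCast_zmod_eq_zero_iff_dvd _ _).mp h1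
  -- divide `g` by `p`
  set g' : MonoidAlgebra ℤ Γ :=
    MonoidAlgebra.ofCoeff (Finsupp.mapRange (fun x : ℤ => x / (p : ℤ)) (by simp) g.coeff) with hg'
  have hpg' : (p : MonoidAlgebra ℤ Γ) * g' = g := by
    apply MonoidAlgebra.ext
    apply Finsupp.ext
    intro γ
    rw [natCast_mul_apply]
    show (p : ℤ) * ((Finsupp.mapRange (fun x : ℤ => x / (p : ℤ)) (by simp) g.coeff) γ) = g.coeff γ
    rw [Finsupp.mapRange_apply]
    exact Int.mul_ediv_cancel' (hdvd γ)
  have hp0 : (p : ℤ) ≠ 0 := by exact_mod_cast hp.ne_zero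
  refine ⟨g', ?_⟩
  rw [smul_eq_mul]
  have key : (p : MonoidAlgebra ℤ Γ) * (g' * f) = (p : MonoidAlgebra ℤ Γ) * h := by
    rw [← mul_assoc, hpg', hg]
  apply MonoidAlgebra.ext
  apply Finsupp.ext
  intro γ
  have hkey : ((p : MonoidAlgebra ℤ Γ) * (g' * f)).coeff γ = ((p : MonoidAlgebra ℤ Γ) * h).coeff γ := by
    rw [key]
  rw [natCast_mul_apply, natCast_mul_apply] at hkey
  exact mul_left_cancel₀ hp0 hkey
end

section
/- Let R be a ring carrying a rank function rk on left modules with values in [0,∞], additive on short exact sequences, satisfying rk(R) = 1, rk(P) ∈ ℕ for every finitely generated projective P, and such that every nonzero left ideal has positive rank. Suppose every finitely generated left ideal of R admits a finite resolution by finitely generated projective modules. If R is left noetherian, then R has no nontrivial zero divisors. -/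
set_option synthInstance.maxHeartbeats 1000000
set_option maxHeartbeats 1000000


open scoped ENNReal

/-- Abstract Farkas–Snider argument: let `R` be a left noetherian ring with a rank function
`rk` on left modules, additive on short exact sequences, with `rk R = 1`, integer values on
finitely generated projectives, and positive on nonzero left ideals.  If every finitely
generated left ideal admits a finite resolution by finitely generated projective modules
(encoded as direct summands of finitely generated free modules), then `R` has no nontrivial
zero divisors. -/
theorem stmt18 (R : Type) [Ring R] [IsNoetherianRing R]
    (rk : (N : Type) → [AddCommGroup N] → [Module R N] → ℝ≥0∞)
    (hadd : ∀ (A : Type) [AddCommGroup A] [Module R A]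
        (B : Type) [AddCommGroup B] [Module R B]
        (C : Type) [AddCommGroup C] [Module R C]
        (φ : A →ₗ[R] B) (ψ : B →ₗ[R] C),
        Function.Injective φ → Function.Surjective ψ → Function.Exact φ ψ →
        rk B = rk A + rk C)
    (hone : rk R = 1)
    (hint : ∀ (P : Type) [AddCommGroup P] [Module R P],
        Module.Projective R P → Module.Finite R P → ∃ k : ℕ, rk P = k)
    (hpos : ∀ I : Submodule R R, I ≠ ⊥ → 0 < rk I)
    (hres : ∀ I : Submodule R R, I.FG →
      ∃ (m : ℕ) (k : ℕ → ℕ) (P : ∀ i : ℕ, Submodule R (Fin (k i) → R))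
        (d : ∀ i : ℕ, ↥(P (i + 1)) →ₗ[R] ↥(P i)) (ε : ↥(P 0) →ₗ[R] ↥I),
        (∀ i, ∃ Q : Submodule R (Fin (k i) → R), IsCompl (P i) Q) ∧
        (∀ i, m < i → P i = ⊥) ∧
        Function.Surjective ε ∧
        Function.Exact (d 0) ε ∧
        (∀ i, Function.Exact (d (i + 1)) (d i))) :
    ∀ a b : R, a * b = 0 → a = 0 ∨ b = 0 := by
  -- rank of a subsingleton module is zero
  have hzero : ∀ (Z : Type) [AddCommGroup Z] [Module R Z], Subsingleton Z → rk Z = 0 := by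
    intro Z _ _ hZ
    have hinj : Function.Injective (0 : Z →ₗ[R] R) := fun x y _ => Subsingleton.elim x y
    have hsurj : Function.Surjective (LinearMap.id : R →ₗ[R] R) := fun x => ⟨x, rfl⟩
    have hex : Function.Exact (0 : Z →ₗ[R] R) (LinearMap.id : R →ₗ[R] R) := by
      intro y
      constructor
      · intro hy; exact ⟨0, by simpa using hy.symm⟩
      · rintro ⟨x, hx⟩; simpa using hx.symm
    have := hadd Z R R 0 LinearMap.id hinj hsurj hex
    rw [hone] at this
    have h1 : rk Z + 1 = 0 + 1 := by rw [zero_add]; exact this.symm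
    exact (ENNReal.add_left_inj (by norm_num)).mp h1
  -- rank additivity for a surjective linear map: rk B = rk (ker ψ) + rk C
  have hsplit : ∀ (B : Type) [AddCommGroup B] [Module R B]
      (C : Type) [AddCommGroup C] [Module R C] (ψ : B →ₗ[R] C),
      Function.Surjective ψ → rk B = rk ↥(LinearMap.ker ψ) + rk C := by
    intro B _ _ C _ _ ψ hs
    refine hadd _ B C (LinearMap.ker ψ).subtype ψ (Submodule.injective_subtype _) hs ?_
    rw [LinearMap.exact_iff, Submodule.range_subtype]
  -- cancellation helper
  have hcancel : ∀ (x : ℝ≥0∞) (n nk : ℕ), (nk : ℝ≥0∞) = n + x → x = ↑(nk - n) := by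
    intro x n nk h
    have hle : n ≤ nk := by
      exact_mod_cast (le_trans (le_add_right le_rfl) h.ge : (n : ℝ≥0∞) ≤ nk)
    have h2 : (n : ℝ≥0∞) + ↑(nk - n) = ↑nk := by
      rw [← Nat.cast_add]; congr 1; omega
    exact (ENNReal.add_right_inj (by simp)).mp (h.symm.trans h2.symm)
  intro a b hab
  by_cases hb : b = 0
  · exact Or.inr hb
  refine Or.inl ?_
  -- the right-multiplication-by-b map
  set f : R →ₗ[R] R := LinearMap.toSpanSingleton R R b with hf
  set I : Submodule R R := LinearMap.ker f with hI
  -- I is finitely generated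
  obtain ⟨m, k, P, d, ε, hcompl, hvanish, hεsurj, hεexact, hdexact⟩ :=
    hres I (IsNoetherian.noetherian I)
  -- each P i is projective and finite, so has integer rank
  have hPint : ∀ i, ∃ n : ℕ, rk ↥(P i) = n := by
    intro i
    obtain ⟨Q, hQ⟩ := hcompl i
    have hproj : Module.Projective R ↥(P i) :=
      Module.Projective.of_split (P i).subtype (Submodule.linearProjOfIsCompl _ _ hQ)
        (LinearMap.ext fun x => Submodule.linearProjOfIsCompl_apply_left hQ x)
    have hfin : Module.Finite R ↥(P i) := Module.Finite.iff_fg.mpr (IsNoetherian.noetherian _)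
    exact hint _ hproj hfin
  -- ranks of images in the resolution are natural numbers
  have hrange : ∀ t i, m + 1 ≤ i + t → ∃ n : ℕ, rk ↥(LinearMap.range (d i)) = n := by
    intro t
    induction t with
    | zero =>
      intro i hi
      refine ⟨0, ?_⟩
      have hP : P (i + 1) = ⊥ := hvanish (i + 1) (by omega)
      have hsub : Subsingleton ↥(P (i + 1)) := by rw [hP]; infer_instance
      have hd0 : d i = 0 := LinearMap.ext fun x => by
        rw [Subsingleton.elim x 0, map_zero]; rfl
      have : LinearMap.range (d i) = ⊥ := by rw [hd0, LinearMap.range_zero]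
      rw [hzero _ (by rw [this]; infer_instance)]; simp
    | succ t ih =>
      intro i hi
      obtain ⟨n, hn⟩ := ih (i + 1) (by omega)
      obtain ⟨nk, hnk⟩ := hPint (i + 1)
      -- exact sequence 0 → ker (d i) → P (i+1) → range (d i) → 0
      have hseq := hsplit ↥(P (i + 1)) ↥(LinearMap.range (d i)) ((d i).rangeRestrict)
        (LinearMap.surjective_rangeRestrict _)
      rw [LinearMap.ker_rangeRestrict] at hseq
      have hker : LinearMap.ker (d i) = LinearMap.range (d (i + 1)) :=
        (LinearMap.exact_iff).mp (hdexact i)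
      rw [hker, hn, hnk] at hseq
      exact ⟨nk - n, hcancel _ n nk hseq⟩
  -- rank of I is a natural number
  have hIint : ∃ t : ℕ, rk ↥I = t := by
    obtain ⟨n, hn⟩ := hrange (m + 1) 0 (by omega)
    obtain ⟨nk, hnk⟩ := hPint 0
    have hseq := hsplit ↥(P 0) ↥I ε hεsurj
    have hker : LinearMap.ker ε = LinearMap.range (d 0) := (LinearMap.exact_iff).mp hεexact
    rw [hker, hn, hnk] at hseq
    exact ⟨nk - n, hcancel _ n nk hseq⟩
  -- main exact sequence: 0 → I → R → range f → 0
  have hmain := hsplit R ↥(LinearMap.range f) (f.rangeRestrict) (LinearMap.surjective_rangeRestrict _)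
  rw [LinearMap.ker_rangeRestrict, hone, ← hI] at hmain
  obtain ⟨t, ht⟩ := hIint
  rw [ht] at hmain
  -- t ≤ 1
  have htle : t ≤ 1 := by
    exact_mod_cast (le_trans (le_add_right le_rfl) hmain.ge : (t : ℝ≥0∞) ≤ 1)
  interval_cases t
  · -- rk I = 0, so I = ⊥ and a = 0
    have hIbot : I = ⊥ := by
      by_contra hne
      exact absurd (ht.le.trans (by norm_num)) (not_le.mpr (hpos I hne))
    have haI : a ∈ I := by
      simp only [hI, LinearMap.mem_ker, hf, LinearMap.toSpanSingleton_apply, smul_eq_mul]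
      exact hab
    rw [hIbot] at haI
    exact haI
  · -- rk I = 1 forces rk (range f) = 0, contradicting b ≠ 0
    exfalso
    have hr0 : rk ↥(LinearMap.range f) = 0 := by
      rw [Nat.cast_one] at hmain
      have : (1 : ℝ≥0∞) + rk ↥(LinearMap.range f) = 1 + 0 := by
        rw [add_zero]; exact hmain.symm
      exact (ENNReal.add_right_inj (by norm_num)).mp this
    have hrne : LinearMap.range f ≠ ⊥ := by
      intro hbot
      apply hb
      have : b ∈ LinearMap.range f := ⟨1, by simp [hf]⟩
      rw [hbot] at this
      exact this
    exact absurd hr0.le (not_le.mpr (hpos _ hrne))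
end
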